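/- Let r be an odd prime power, let q = r², let F_q be the finite field with q elements, and let μ be a generator of the multiplicative group F_qˣ. For β ∈ F_r = {α ∈ F_q : α^r = α} one has 1 − μβ ≠ 0; let M_β be the number of elements α ∈ F_r^* = {α ∈ F_q : α^r = α, α ≠ 0} such that (μ/(1 − μβ))·α − 1 is a non-square in F_q, and set A = M_0. Then M_β = A if 1 − μβ is a square in F_q, and M_β = r − A if 1 − μβ is a non-square in F_q. -/

import Mathlib

open scoped Classical
open Polynomial

-- cardinality of the fixed set of x ↦ x^r in a field of r² elements
lemma aux_card_subfield (r q : ℕ) (hr2 : 2 ≤ r) (hq : q = r ^ 2)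
    (F : Type*) [Field F] [Fintype F] (hF : Fintype.card F = q) :
    {α : F | α ^ r = α}.ncard = r := by
  classical
  have hq2 : 2 ≤ q := by nlinarith
  set f : F[X] := X ^ r - X with hf
  have hfne : f ≠ 0 := FiniteField.X_pow_card_sub_X_ne_zero F (by omega)
  have hdegf : f.natDegree = r := by
    rw [hf]
    compute_degree!
    · rw [if_neg (by omega)]; norm_num
    · omega
  have hdvd : f ∣ (X ^ q - X : F[X]) := by
    have h1 : (X ^ r : F[X]) - X ∣ (X ^ r) ^ r - X ^ r := by
      simpa using sub_dvd_pow_sub_pow (X ^ r : F[X]) X r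
    have h2 : ((X ^ r : F[X]) ^ r - X ^ r) + (X ^ r - X) = X ^ q - X := by
      rw [← pow_mul, hq]; ring
    rw [← h2]
    exact dvd_add h1 dvd_rfl
  obtain ⟨g, hg⟩ := hdvd
  have hbig : (X ^ q - X : F[X]) ≠ 0 := FiniteField.X_pow_card_sub_X_ne_zero F (by omega)
  have hgne : g ≠ 0 := by rintro rfl; simp [hg] at hbig
  have hroots : (X ^ q - X : F[X]).roots = Finset.univ.val := by
    have := FiniteField.roots_X_pow_card_sub_X F
    rwa [hF] at this
  have hcardq : Multiset.card (X ^ q - X : F[X]).roots = q := by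
    rw [hroots]; simpa using hF
  have hdegbig : (X ^ q - X : F[X]).natDegree = q := by
    compute_degree!
    · rw [if_neg (by omega)]; norm_num
    · omega
  have hdegg : g.natDegree = q - r := by
    have := hdegbig
    rw [hg, natDegree_mul hfne hgne, hdegf] at this
    omega
  have hsum : Multiset.card f.roots + Multiset.card g.roots = q := by
    have : (X ^ q - X : F[X]).roots = f.roots + g.roots := by
      rw [hg, roots_mul (hg ▸ hbig)]
    rw [this, Multiset.card_add] at hcardq
    exact hcardq
  have hle1 : Multiset.card f.roots ≤ r := hdegf ▸ f.card_roots'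
  have hle2 : Multiset.card g.roots ≤ q - r := hdegg ▸ g.card_roots'
  have hrq : r ≤ q := by nlinarith
  have hcardf : Multiset.card f.roots = r := by omega
  have hnodup : f.roots.Nodup := by
    have hle : f.roots ≤ (X ^ q - X : F[X]).roots := roots.le_of_dvd hbig ⟨g, hg⟩
    have : (X ^ q - X : F[X]).roots.Nodup := hroots ▸ Finset.univ.nodup
    exact Multiset.nodup_of_le hle this
  have hset : {α : F | α ^ r = α} = ↑f.roots.toFinset := by
    ext α
    simp only [Set.mem_setOf_eq, Finset.coe_sort_coe, Finset.mem_coe,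
      Multiset.mem_toFinset, mem_roots hfne, mem_roots (show (X ^ r - X : F[X]) ≠ 0 from hfne), IsRoot.def, hf, eval_sub, eval_pow, eval_X,
      sub_eq_zero]
  rw [hset, Set.ncard_coe_finset, Multiset.toFinset_card_of_nodup hnodup, hcardf]

theorem count_nonsquares_Mbeta (p n r q : ℕ) (hp : p.Prime) (hodd : Odd p)
    (hn : 1 ≤ n) (hr : r = p ^ n) (hq : q = r ^ 2)
    (F : Type*) [Field F] [Fintype F] (hF : Fintype.card F = q)
    (μ : F) (hμ : orderOf μ = q - 1)
    (β : F) (hβ : β ^ r = β) :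
    1 - μ * β ≠ 0 ∧
    ({α : F | α ^ r = α ∧ α ≠ 0 ∧
        ¬ ∃ x : F, x ^ 2 = (μ / (1 - μ * β)) * α - 1}.ncard =
      if ∃ x : F, x ^ 2 = 1 - μ * β then
        {α : F | α ^ r = α ∧ α ≠ 0 ∧ ¬ ∃ x : F, x ^ 2 = μ * α - 1}.ncard
      else
        r - {α : F | α ^ r = α ∧ α ≠ 0 ∧ ¬ ∃ x : F, x ^ 2 = μ * α - 1}.ncard) := by
  classical
  have hp2 : p ≠ 2 := by rintro rfl; simp [Nat.odd_iff] at hodd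
  have hp3 : 3 ≤ p := by have := hp.two_le; omega
  have hr3 : 3 ≤ r := by
    rw [hr]; calc 3 ≤ p := hp3
    _ ≤ p ^ n := Nat.le_self_pow (by omega) p
  have hq3r : 3 * r ≤ q := by nlinarith
  have hq9 : 9 ≤ q := by omega
  have hμ0 : μ ≠ 0 := by
    rintro rfl
    have h := pow_orderOf_eq_one (0 : F)
    rw [hμ, zero_pow (by omega)] at h
    exact one_ne_zero h.symm
  have key : ∀ δ : F, δ ^ r = δ → 1 - μ * δ ≠ 0 := by
    intro δ hδ h0
    have hδ0 : δ ≠ 0 := by rintro rfl; simp at h0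
    have h1 : (1 : F) = μ * δ := eq_of_sub_eq_zero h0
    have hμr : μ ^ r = μ := by
      have h2 : (μ * δ) ^ r = 1 := by rw [← h1, one_pow]
      rw [mul_pow, hδ] at h2
      have h3 : μ ^ r * δ = μ * δ := by rw [h2, ← h1]
      exact mul_right_cancel₀ hδ0 h3
    have hpow : μ ^ (r - 1) = 1 := by
      have h2 : μ ^ (r - 1) * μ = 1 * μ := by
        rw [one_mul, ← pow_succ]
        rw [show r - 1 + 1 = r by omega, hμr]
      exact mul_right_cancel₀ hμ0 h2
    have hdvd := orderOf_dvd_of_pow_eq_one hpow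
    rw [hμ] at hdvd
    have hle := Nat.le_of_dvd (by omega) hdvd
    omega
  have h1 : 1 - μ * β ≠ 0 := key β hβ
  -- characteristic
  haveI hfact : Fact p.Prime := ⟨hp⟩
  obtain ⟨m, hm, hcard⟩ := FiniteField.card F (ringChar F)
  have hcharp : ringChar F = p := by
    have hd : (ringChar F) ∣ Fintype.card F := hcard ▸ dvd_pow_self _ m.pos.ne'
    rw [hF, hq, hr, ← pow_mul] at hd
    exact (Nat.prime_dvd_prime_iff_eq hm hp).mp (hm.dvd_of_dvd_pow hd)
  haveI : CharP F p := hcharp ▸ ringChar.charP F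
  have hfrob_add : ∀ x y : F, (x + y) ^ r = x ^ r + y ^ r := by
    intro x y; rw [hr]; exact add_pow_char_pow x y p n
  have hoddr : Odd r := hr ▸ hodd.pow
  have hm1 : IsSquare (-1 : F) := by
    rw [FiniteField.isSquare_neg_one_iff, hF]
    obtain ⟨k, hk⟩ := hoddr
    have : q = 4 * (k * k + k) + 1 := by rw [hq, hk]; ring
    omega
  have hiff : ∀ a : F, (¬ ∃ x : F, x ^ 2 = a) ↔ quadraticChar F a = -1 := by
    intro a
    rw [quadraticChar_neg_one_iff_not_isSquare]
    constructor
    · rintro h ⟨x, hx⟩; exact h ⟨x, by rw [hx]; ring⟩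
    · rintro h ⟨x, hx⟩; exact h ⟨x, by rw [← hx]; ring⟩
  have hχm1 : quadraticChar F (-1 : F) = 1 :=
    (quadraticChar_one_iff_isSquare (by norm_num)).mpr hm1
  have hχdiv : ∀ (y c : F), c ≠ 0 → quadraticChar F (y / c)
      = quadraticChar F y * quadraticChar F c := by
    intro y c hc
    have h2 : quadraticChar F c * quadraticChar F c = 1 := by
      rw [← map_mul, ← sq]; exact quadraticChar_sq_one' hc
    have h3 : quadraticChar F (y / c) * quadraticChar F c = quadraticChar F y := by
      rw [← map_mul]; congr 1; field_simp
    calc quadraticChar F (y / c)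
        = quadraticChar F (y / c) * (quadraticChar F c * quadraticChar F c) := by
          rw [h2, mul_one]
      _ = (quadraticChar F (y / c) * quadraticChar F c) * quadraticChar F c := by ring
      _ = quadraticChar F y * quadraticChar F c := by rw [h3]
  set γ := 1 - μ * β with hγdef
  refine ⟨h1, ?_⟩
  have hne : ∀ t : F, t ^ r = t → μ * t - 1 ≠ 0 := by
    intro t ht h
    exact key t ht (by linear_combination -h)
  have hAset : {α : F | α ^ r = α ∧ α ≠ 0 ∧ ¬ ∃ x : F, x ^ 2 = μ * α - 1}
      = {α : F | α ^ r = α ∧ quadraticChar F (μ * α - 1) = -1} := by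
    ext α
    simp only [Set.mem_setOf_eq, hiff]
    constructor
    · rintro ⟨ha, _, hc⟩; exact ⟨ha, hc⟩
    · rintro ⟨ha, hc⟩
      refine ⟨ha, ?_, hc⟩
      rintro rfl
      rw [mul_zero, zero_sub, hχm1] at hc; norm_num at hc
  have hstep2 : {α : F | α ^ r = α ∧ α ≠ 0 ∧ ¬ ∃ x : F, x ^ 2 = μ / γ * α - 1}
      = {α : F | α ^ r = α ∧ α ≠ 0 ∧
          quadraticChar F (μ * (α + β) - 1) * quadraticChar F γ = -1} := by
    ext α
    have heq : μ / γ * α - 1 = (μ * (α + β) - 1) / γ := by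
      rw [div_mul_eq_mul_div, div_sub_one h1, hγdef]; ring
    simp only [Set.mem_setOf_eq, hiff, heq, hχdiv (μ * (α + β) - 1) γ h1]
  have hstep3 : {α : F | α ^ r = α ∧ α ≠ 0 ∧
        quadraticChar F (μ * (α + β) - 1) * quadraticChar F γ = -1}.ncard
      = {t : F | t ^ r = t ∧ t ≠ β ∧
          quadraticChar F (μ * t - 1) * quadraticChar F γ = -1}.ncard := by
    rw [show {t : F | t ^ r = t ∧ t ≠ β ∧
          quadraticChar F (μ * t - 1) * quadraticChar F γ = -1}
        = (fun α : F => α + β) '' {α : F | α ^ r = α ∧ α ≠ 0 ∧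
          quadraticChar F (μ * (α + β) - 1) * quadraticChar F γ = -1} from ?_]
    · rw [Set.ncard_image_of_injective _ (add_left_injective β)]
    ext t
    simp only [Set.mem_image, Set.mem_setOf_eq]
    constructor
    · rintro ⟨ha, hb, hc⟩
      refine ⟨t - β, ⟨?_, ?_, ?_⟩, by ring⟩
      · have h4 : (t + -β) ^ r = t ^ r + (-β) ^ r := hfrob_add t (-β)
        rw [hoddr.neg_pow, ha, hβ] at h4
        simpa [sub_eq_add_neg] using h4
      · intro h; exact hb (sub_eq_zero.mp h)
      · simpa [sub_add_cancel] using hc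
    · rintro ⟨a, ⟨ha, hb, hc⟩, rfl⟩
      refine ⟨by rw [hfrob_add a β, ha, hβ], ?_, hc⟩
      simpa using hb
  have hNsub : {α : F | α ^ r = α ∧ quadraticChar F (μ * α - 1) = -1}
      ⊆ {t : F | t ^ r = t} := fun t ht => ht.1
  have hScard : {t : F | t ^ r = t}.ncard = r :=
    aux_card_subfield r q (by omega) hq F hF
  have hβγ : μ * β - 1 = -1 * γ := by rw [hγdef]; ring
  by_cases hsq : ∃ x : F, x ^ 2 = γ
  · rw [if_pos hsq]
    have hχγ : quadraticChar F γ = 1 := by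
      obtain ⟨x, hx⟩ := hsq
      exact (quadraticChar_one_iff_isSquare h1).mpr ⟨x, by rw [← hx]; ring⟩
    have hfin : {t : F | t ^ r = t ∧ t ≠ β ∧
          quadraticChar F (μ * t - 1) * quadraticChar F γ = -1}
        = {α : F | α ^ r = α ∧ quadraticChar F (μ * α - 1) = -1} := by
      ext t
      simp only [Set.mem_setOf_eq, hχγ, mul_one]
      constructor
      · rintro ⟨ha, _, hc⟩; exact ⟨ha, hc⟩
      · rintro ⟨ha, hc⟩
        refine ⟨ha, ?_, hc⟩
        rintro rfl
        rw [hβγ, map_mul, hχm1, hχγ] at hc; norm_num at hc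
    rw [hstep2, hstep3, hfin, hAset]
  · rw [if_neg hsq]
    have hχγ : quadraticChar F γ = -1 := by
      rw [quadraticChar_neg_one_iff_not_isSquare]
      rintro ⟨x, hx⟩
      exact hsq ⟨x, by rw [hx]; ring⟩
    have hset : {t : F | t ^ r = t ∧ t ≠ β ∧
          quadraticChar F (μ * t - 1) * quadraticChar F γ = -1}
        = {t : F | t ^ r = t} \ {α : F | α ^ r = α ∧ quadraticChar F (μ * α - 1) = -1} := by
      ext t
      simp only [Set.mem_setOf_eq, Set.mem_diff, hχγ]
      constructor
      · rintro ⟨ha, _, hc⟩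
        refine ⟨ha, ?_⟩
        rintro ⟨_, h4⟩
        rw [h4] at hc; norm_num at hc
      · rintro ⟨ha, hb⟩
        have h4 : quadraticChar F (μ * t - 1) = 1 := by
          rcases quadraticChar_dichotomy (hne t ha) with h | h
          · exact h
          · exact absurd ⟨ha, h⟩ hb
        refine ⟨ha, ?_, by rw [h4]; norm_num⟩
        rintro rfl
        rw [hβγ, map_mul, hχm1, hχγ] at h4; norm_num at h4
    rw [hstep2, hstep3, hset, hAset,
      Set.ncard_diff hNsub, hScard]
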